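/- Let λ > 0, λ_e > 0, c > 0 be real numbers. There exists a constant C > 0 such that for every natural number n ≥ 2, if v : ℕ → ℝ satisfies, for every j with 1 ≤ j ≤ n, either the disconnected recursion v(j) = (λ_e + j(n−j)(λ/c)·v(j+1)) / (jλ/n + jλ/c + j(n−j)λ/c) or the fully connected recursion v(j) = (λ_e + j(n−j)(λ/(n−1) + λ/c)·v(j+1)) / (jλ/n + jλ/c + j(n−j)(λ/(n−1) + λ/c)), then v(1) ≤ C·(ln n)/n. (This is the constant f(n) = c case of the scaling lemma: v(1) = O((ln n)/n) for both topologies.) -/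

import Mathlib

private lemma log_gap (x : ℝ) (hx : 1 ≤ x) : 1/(2*x) ≤ Real.log (x+1) - Real.log x := by
  have hx0 : (0:ℝ) < x := by linarith
  have h1 : Real.log (x/(x+1)) ≤ x/(x+1) - 1 :=
    Real.log_le_sub_one_of_pos (by positivity)
  rw [Real.log_div (by positivity) (by positivity)] at h1
  have h2 : x/(x+1) - 1 = -(1/(x+1)) := by field_simp; ring
  have h3 : 1/(2*x) ≤ 1/(x+1) := by
    rw [div_le_div_iff₀ (by positivity) (by positivity)]
    linarith
  linarith

noncomputable def Bfun (lam lamE c : ℝ) (n j : ℕ) : ℝ :=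
  2*c*lamE/lam/(n:ℝ) * (1 + Real.log n - Real.log j + Real.log ((n:ℝ)+1-(j:ℝ)))

private lemma aux_main (lam lamE c : ℝ) (hlam : 0 < lam) (hlamE : 0 < lamE) (hc : 0 < c)
    (n : ℕ) (hn : 2 ≤ n) (g : ℝ) (hg : lam / c ≤ g) (v : ℕ → ℝ)
    (hv : ∀ j : ℕ, 1 ≤ j → j ≤ n →
      v j = (lamE + (j : ℝ) * ((n : ℝ) - j) * g * v (j + 1)) /
        ((j : ℝ) * lam / n + (j : ℝ) * lam / c + (j : ℝ) * ((n : ℝ) - j) * g)) :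
    v 1 ≤ 2*c*lamE/lam/(n:ℝ) * (1 + 2*Real.log n) := by
  have hN : (2:ℝ) ≤ (n:ℝ) := by exact_mod_cast hn
  have hN0 : (0:ℝ) < (n:ℝ) := by linarith
  have hM0 : 0 < 2*c*lamE/lam := by positivity
  have hg0 : 0 < g := lt_of_lt_of_le (by positivity) hg
  have hlamM : lam * (2*c*lamE/lam) = 2*c*lamE := by field_simp
  have key : ∀ d j : ℕ, 1 ≤ j → j + d = n → v j ≤ Bfun lam lamE c n j := by
    intro d
    induction d with
    | zero =>
      intro j hj hjn
      have hj' : j = n := by omega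
      subst hj'
      have heq := hv j hj le_rfl
      have h0 : (j:ℝ) - (j:ℝ) = 0 := sub_self _
      rw [heq]
      have hden : (j:ℝ) * lam / j + (j:ℝ) * lam / c + (j:ℝ) * ((j:ℝ) - (j:ℝ)) * g
          = lam + (j:ℝ)*lam/c := by
        rw [h0]
        field_simp
        ring
      have hBn : Bfun lam lamE c j j = 2*c*lamE/lam/(j:ℝ) := by
        unfold Bfun
        rw [show ((j:ℝ)+1-(j:ℝ)) = 1 by ring, Real.log_one]
        ring
      have hnum : lamE + (j:ℝ)*((j:ℝ)-(j:ℝ))*g*v (j+1) = lamE := by ring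
      rw [hnum, hden, hBn]
      have hjpos : (0:ℝ) < (j:ℝ) := by
        have : (2:ℝ) ≤ (j:ℝ) := by exact_mod_cast hn
        linarith
      rw [div_le_div_iff₀ (by positivity) hjpos]
      have h1 : 2*c*lamE/lam * (lam + (j:ℝ)*lam/c) = 2*c*lamE + 2*lamE*(j:ℝ) := by
        field_simp
      rw [h1]
      nlinarith [mul_nonneg hlamE.le (Nat.cast_nonneg j : (0:ℝ) ≤ (j:ℝ))]
    | succ d ih =>
      intro j hj hjn
      have hjn' : j + 1 ≤ n := by omega
      have hB1 : v (j+1) ≤ Bfun lam lamE c n (j+1) := ih (j+1) (by omega) (by omega)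
      have hjr1 : (1:ℝ) ≤ (j:ℝ) := by exact_mod_cast hj
      have hjr0 : (0:ℝ) < (j:ℝ) := by linarith
      have hjN : (j:ℝ) + 1 ≤ (n:ℝ) := by exact_mod_cast hjn'
      have hNj1 : (1:ℝ) ≤ (n:ℝ) - (j:ℝ) := by linarith
      have hNj0 : (0:ℝ) < (n:ℝ) - (j:ℝ) := by linarith
      rw [hv j hj (by omega)]
      have hden : 0 < (j:ℝ) * lam / n + (j:ℝ) * lam / c + (j:ℝ) * ((n:ℝ) - j) * g := by
        have h1 : 0 < (j:ℝ) * ((n:ℝ) - j) * g := by positivity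
        have h2 : 0 < (j:ℝ) * lam / n := by positivity
        have h3 : 0 < (j:ℝ) * lam / c := by positivity
        linarith
      rw [div_le_iff₀ hden]
      -- abbreviations
      have hgap1 : 1/(2*(j:ℝ)) ≤ Real.log ((j:ℝ)+1) - Real.log (j:ℝ) := log_gap _ hjr1
      have hgap2 : 1/(2*((n:ℝ)-(j:ℝ))) ≤ Real.log (((n:ℝ)-(j:ℝ))+1) - Real.log ((n:ℝ)-(j:ℝ)) :=
        log_gap _ hNj1
      have hBdiff : Bfun lam lamE c n j - Bfun lam lamE c n (j+1)
          = 2*c*lamE/lam/(n:ℝ) * ((Real.log ((j:ℝ)+1) - Real.log (j:ℝ))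
              + (Real.log (((n:ℝ)-(j:ℝ))+1) - Real.log ((n:ℝ)-(j:ℝ)))) := by
        unfold Bfun
        push_cast
        rw [show ((n:ℝ)+1-((j:ℝ)+1)) = (n:ℝ)-(j:ℝ) by ring,
            show ((n:ℝ)+1-(j:ℝ)) = ((n:ℝ)-(j:ℝ))+1 by ring]
        ring
      have hsum : 1/(2*(j:ℝ)) + 1/(2*((n:ℝ)-(j:ℝ)))
          = (n:ℝ)/(2*((j:ℝ)*((n:ℝ)-(j:ℝ)))) := by
        field_simp
        ring
      have hD : 2*c*lamE/lam/(2*((j:ℝ)*((n:ℝ)-(j:ℝ))))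
          ≤ Bfun lam lamE c n j - Bfun lam lamE c n (j+1) := by
        rw [hBdiff]
        have h1 : 1/(2*(j:ℝ)) + 1/(2*((n:ℝ)-(j:ℝ)))
            ≤ (Real.log ((j:ℝ)+1) - Real.log (j:ℝ))
              + (Real.log (((n:ℝ)-(j:ℝ))+1) - Real.log ((n:ℝ)-(j:ℝ))) := by linarith
        have h2 : 2*c*lamE/lam/(n:ℝ) * ((n:ℝ)/(2*((j:ℝ)*((n:ℝ)-(j:ℝ)))))
            = 2*c*lamE/lam/(2*((j:ℝ)*((n:ℝ)-(j:ℝ)))) := by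
          field_simp
        calc 2*c*lamE/lam/(2*((j:ℝ)*((n:ℝ)-(j:ℝ))))
            = 2*c*lamE/lam/(n:ℝ) * ((n:ℝ)/(2*((j:ℝ)*((n:ℝ)-(j:ℝ))))) := h2.symm
          _ = 2*c*lamE/lam/(n:ℝ) * (1/(2*(j:ℝ)) + 1/(2*((n:ℝ)-(j:ℝ)))) := by rw [hsum]
          _ ≤ _ := by
              apply mul_le_mul_of_nonneg_left h1 (by positivity)
      have hDpos : 0 ≤ Bfun lam lamE c n j - Bfun lam lamE c n (j+1) := by
        have : (0:ℝ) < 2*c*lamE/lam/(2*((j:ℝ)*((n:ℝ)-(j:ℝ)))) := by positivity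
        linarith
      -- a ΔB ≥ lamE
      have hPg : (j:ℝ)*((n:ℝ)-(j:ℝ))*(lam/c) ≤ (j:ℝ)*((n:ℝ)-(j:ℝ))*g :=
        mul_le_mul_of_nonneg_left hg (by positivity)
      have hkey : lamE ≤ (j:ℝ)*((n:ℝ)-(j:ℝ))*g
          * (Bfun lam lamE c n j - Bfun lam lamE c n (j+1)) := by
        have h1 : (j:ℝ)*((n:ℝ)-(j:ℝ))*(lam/c) * (2*c*lamE/lam/(2*((j:ℝ)*((n:ℝ)-(j:ℝ)))))
            = lamE := by
          field_simp
        calc lamE = (j:ℝ)*((n:ℝ)-(j:ℝ))*(lam/c)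
              * (2*c*lamE/lam/(2*((j:ℝ)*((n:ℝ)-(j:ℝ))))) := h1.symm
          _ ≤ (j:ℝ)*((n:ℝ)-(j:ℝ))*(lam/c)
              * (Bfun lam lamE c n j - Bfun lam lamE c n (j+1)) :=
              mul_le_mul_of_nonneg_left hD (by positivity)
          _ ≤ (j:ℝ)*((n:ℝ)-(j:ℝ))*g
              * (Bfun lam lamE c n j - Bfun lam lamE c n (j+1)) :=
              mul_le_mul_of_nonneg_right hPg hDpos
      -- B j ≥ 0
      have hjNle : (j:ℝ) ≤ (n:ℝ) := by linarith
      have hBj0 : 0 ≤ Bfun lam lamE c n j := by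
        unfold Bfun
        have h1 : Real.log (j:ℝ) ≤ Real.log (n:ℝ) := Real.log_le_log hjr0 hjNle
        have h2 : 0 ≤ Real.log ((n:ℝ)+1-(j:ℝ)) := Real.log_nonneg (by linarith)
        apply mul_nonneg (by positivity)
        linarith
      have hvB : (j:ℝ)*((n:ℝ)-(j:ℝ))*g * v (j+1)
          ≤ (j:ℝ)*((n:ℝ)-(j:ℝ))*g * Bfun lam lamE c n (j+1) :=
        mul_le_mul_of_nonneg_left hB1 (by positivity)
      have hbB : 0 ≤ ((j:ℝ)*lam/(n:ℝ) + (j:ℝ)*lam/c) * Bfun lam lamE c n j :=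
        mul_nonneg (by positivity) hBj0
      have hexp : Bfun lam lamE c n j
            * ((j:ℝ) * lam / n + (j:ℝ) * lam / c + (j:ℝ) * ((n:ℝ) - j) * g)
          = ((j:ℝ)*lam/(n:ℝ) + (j:ℝ)*lam/c) * Bfun lam lamE c n j
            + (j:ℝ)*((n:ℝ)-(j:ℝ))*g * Bfun lam lamE c n (j+1)
            + (j:ℝ)*((n:ℝ)-(j:ℝ))*g
              * (Bfun lam lamE c n j - Bfun lam lamE c n (j+1)) := by ring
      rw [hexp]
      linarith
  have h1 := key (n-1) 1 le_rfl (by omega)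
  have hB1 : Bfun lam lamE c n 1 = 2*c*lamE/lam/(n:ℝ) * (1 + 2*Real.log n) := by
    unfold Bfun
    rw [Nat.cast_one, Real.log_one, show ((n:ℝ)+1-1) = (n:ℝ) by ring]
    ring
  rw [hB1] at h1
  exact h1

theorem stmt_9 (lam lamE c : ℝ) (hlam : 0 < lam) (hlamE : 0 < lamE) (hc : 0 < c) :
    ∃ C : ℝ, 0 < C ∧ ∀ n : ℕ, 2 ≤ n → ∀ v : ℕ → ℝ,
      ((∀ j : ℕ, 1 ≤ j → j ≤ n →
          v j = (lamE + (j : ℝ) * ((n : ℝ) - j) * (lam / c) * v (j + 1)) /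
            ((j : ℝ) * lam / n + (j : ℝ) * lam / c
              + (j : ℝ) * ((n : ℝ) - j) * lam / c)) ∨
       (∀ j : ℕ, 1 ≤ j → j ≤ n →
          v j = (lamE + (j : ℝ) * ((n : ℝ) - j) * (lam / ((n : ℝ) - 1) + lam / c) * v (j + 1)) /
            ((j : ℝ) * lam / n + (j : ℝ) * lam / c
              + (j : ℝ) * ((n : ℝ) - j) * (lam / ((n : ℝ) - 1) + lam / c)))) →
      v 1 ≤ C * Real.log n / n := by
  have hl2 : (0:ℝ) < Real.log 2 := Real.log_pos (by norm_num)
  refine ⟨2*c*lamE/lam * (2 + 1/Real.log 2), by positivity, ?_⟩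
  intro n hn v hv
  have hN : (2:ℝ) ≤ (n:ℝ) := by exact_mod_cast hn
  have hN0 : (0:ℝ) < (n:ℝ) := by linarith
  have hlog : Real.log 2 ≤ Real.log (n:ℝ) := Real.log_le_log (by norm_num) hN
  have hbound : v 1 ≤ 2*c*lamE/lam/(n:ℝ) * (1 + 2*Real.log n) := by
    rcases hv with h | h
    · refine aux_main lam lamE c hlam hlamE hc n hn (lam/c) le_rfl v ?_
      intro j h1 h2
      rw [h j h1 h2]
      ring
    · refine aux_main lam lamE c hlam hlamE hc n hn (lam/((n:ℝ)-1) + lam/c) ?_ v h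
      have : 0 ≤ lam/((n:ℝ)-1) := div_nonneg hlam.le (by linarith)
      linarith
  have hfin : 2*c*lamE/lam/(n:ℝ) * (1 + 2*Real.log n)
      ≤ 2*c*lamE/lam * (2 + 1/Real.log 2) * Real.log n / n := by
    have h1 : 1 + 2*Real.log (n:ℝ) ≤ (2 + 1/Real.log 2) * Real.log (n:ℝ) := by
      have h2 : (1:ℝ) ≤ Real.log (n:ℝ) / Real.log 2 := (one_le_div hl2).mpr hlog
      have h3 : (2 + 1/Real.log 2) * Real.log (n:ℝ)
          = 2*Real.log (n:ℝ) + Real.log (n:ℝ) / Real.log 2 := by ring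
      linarith
    have h4 : 2*c*lamE/lam/(n:ℝ) * (1 + 2*Real.log n)
        ≤ 2*c*lamE/lam/(n:ℝ) * ((2 + 1/Real.log 2) * Real.log (n:ℝ)) :=
      mul_le_mul_of_nonneg_left h1 (by positivity)
    calc 2*c*lamE/lam/(n:ℝ) * (1 + 2*Real.log n)
        ≤ 2*c*lamE/lam/(n:ℝ) * ((2 + 1/Real.log 2) * Real.log (n:ℝ)) := h4
      _ = 2*c*lamE/lam * (2 + 1/Real.log 2) * Real.log n / n := by ring
  linarith
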